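/- Every faithful state ψ on the matrix algebra M_n(ℂ) is of the form ψ = Tr(Q·) for a unique positive invertible matrix Q with Tr(Q) = 1, and ψ is a δ-form with δ = Tr(Q⁻¹), i.e. m m* = Tr(Q⁻¹)·id, where m is multiplication and m* its adjoint with respect to the inner product ⟨x,y⟩ = ψ(y*x). -/

import Mathlib

open scoped TensorProduct ComplexOrder

/-- The sesquilinear pairing `u ↦ ⟨u, x ⊗ y⟩` on `B ⊗ B`, where `B` carries the
inner product `⟨a, b⟩ = ψ(b* a)` induced by a state `ψ`; on pure tensors,
`⟨a ⊗ b, x ⊗ y⟩ = ψ(x* a) ψ(y* b)`. -/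
noncomputable def pairing {M : Type*} [Ring M] [StarRing M] [Algebra ℂ M]
    (ψ : M →ₗ[ℂ] ℂ) (x y : M) : M ⊗[ℂ] M →ₗ[ℂ] ℂ :=
  TensorProduct.lift ((LinearMap.mul ℂ ℂ).compl₁₂
    (ψ ∘ₗ LinearMap.mulLeft ℂ (star x)) (ψ ∘ₗ LinearMap.mulLeft ℂ (star y)))

/-- `ψ` is a `δ`-form: the multiplication map `m : B ⊗ B → B` and its adjoint
`m*` with respect to the inner products induced by `ψ` satisfy `m m* = δ·id`. -/
def IsDeltaForm {M : Type*} [Ring M] [StarRing M] [Algebra ℂ M]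
    (ψ : M →ₗ[ℂ] ℂ) (δ : ℂ) : Prop :=
  ∃ T : M →ₗ[ℂ] M ⊗[ℂ] M,
    (∀ a x y : M, pairing ψ x y (T a) = ψ (star (x * y) * a)) ∧
    (LinearMap.mul' ℂ M) ∘ₗ T = δ • LinearMap.id

open Matrix in
lemma aux_trace_mul_E_mul {n : ℕ} (M N : Matrix (Fin n) (Fin n) ℂ) (i j : Fin n) :
    (M * Matrix.single i j (1:ℂ) * N).trace = (N * M) j i := by
  simp [Matrix.trace, Matrix.mul_apply, Matrix.single, Finset.sum_mul, ite_and,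
    Finset.mul_sum, mul_comm]

open Matrix in
lemma aux_star_E {n : ℕ} (i j : Fin n) :
    star (Matrix.single i j (1:ℂ)) = Matrix.single j i (1:ℂ) := by
  ext k l
  simp [Matrix.single, Matrix.star_apply, and_comm]

open Matrix in
lemma aux_sum_E {n : ℕ} : ∑ i : Fin n, Matrix.single i i (1:ℂ) = 1 := by
  ext k l
  by_cases h : k = l <;>
    simp [Matrix.single, Matrix.sum_apply, Matrix.one_apply, h, Finset.sum_ite_eq]

open Matrix in
lemma aux_sandwich {n : ℕ} (M : Matrix (Fin n) (Fin n) ℂ) (i j : Fin n) :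
    Matrix.single i j (1:ℂ) * M * Matrix.single j i (1:ℂ) = M j j • Matrix.single i i (1:ℂ) := by
  ext k l
  simp [Matrix.mul_apply, Matrix.single, ite_and, Finset.sum_mul, mul_comm]
  by_cases h1 : i = k <;> by_cases h2 : i = l <;> simp [h1, h2]

lemma aux_pairing_tmul {M : Type*} [Ring M] [StarRing M] [Algebra ℂ M] (ψ : M →ₗ[ℂ] ℂ)
    (x y u v : M) : pairing ψ x y (u ⊗ₜ[ℂ] v) = ψ (star x * u) * ψ (star y * v) := by
  simp [pairing]

open Matrix

/-- Every faithful state `ψ` on `M_n(ℂ)` is of the form `Tr(Q ·)` for a unique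
positive invertible `Q` with `Tr(Q) = 1`, and `ψ` is a `δ`-form with
`δ = Tr(Q⁻¹)`, i.e. `m m* = Tr(Q⁻¹)·id`. -/
theorem faithful_state_matrix_deltaForm (n : ℕ) (hn : 0 < n)
    (ψ : Matrix (Fin n) (Fin n) ℂ →ₗ[ℂ] ℂ)
    (hstate : ψ 1 = 1)
    (hpos : ∀ x, 0 ≤ (ψ (star x * x)).re ∧ (ψ (star x * x)).im = 0)
    (hfaith : ∀ x, ψ (star x * x) = 0 → x = 0) :
    (∃! Q : Matrix (Fin n) (Fin n) ℂ,
      Q.PosDef ∧ Q.trace = 1 ∧ ∀ x, ψ x = (Q * x).trace) ∧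
    (∀ Q : Matrix (Fin n) (Fin n) ℂ,
      Q.PosDef → Q.trace = 1 → (∀ x, ψ x = (Q * x).trace) →
        IsDeltaForm ψ (Q⁻¹).trace) := by
  set E : Fin n → Fin n → Matrix (Fin n) (Fin n) ℂ := fun i j => Matrix.single i j 1 with hE
  constructor
  · -- existence and uniqueness of Q
    set Q : Matrix (Fin n) (Fin n) ℂ := Matrix.of (fun i j => ψ (E j i)) with hQdef
    have hsmul : ∀ (i j : Fin n) (c : ℂ), Matrix.single i j c = c • E i j := by
      intro i j c
      ext k l
      simp only [Matrix.single, Matrix.smul_apply, Matrix.of_apply, E, smul_eq_mul]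
      split_ifs <;> simp
    have hψ : ∀ x, ψ x = (Q * x).trace := by
      intro x
      conv_lhs => rw [matrix_eq_sum_single x]
      simp only [map_sum, hsmul, _root_.map_smul, smul_eq_mul]
      simp only [Matrix.trace, Matrix.mul_apply, Matrix.diag, hQdef, Matrix.of_apply,
        Finset.sum_mul, Finset.mul_sum]
      rw [Finset.sum_comm]
      exact Finset.sum_congr rfl fun i _ => Finset.sum_congr rfl fun j _ => mul_comm _ _
    have k0 : Fin n := ⟨0, hn⟩
    have hEmul : ∀ i j : Fin n, star (E k0 i) * E k0 j = E i j := by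
      intro i j
      rw [hE]
      simp only [aux_star_E, Matrix.single_mul_single_same, one_mul]
    have hdiag : ∀ i, (ψ (E i i)).im = 0 := by
      intro i
      have := (hpos (E k0 i)).2
      rwa [hEmul] at this
    have hpair : ∀ i j : Fin n, ψ (E i j) = (starRingEnd ℂ) (ψ (E j i)) := by
      intro i j
      have expand : ∀ c : ℂ, star (E k0 i + c • E k0 j) * (E k0 i + c • E k0 j)
          = E i i + c • E i j + (starRingEnd ℂ c) • E j i +
            (c * starRingEnd ℂ c) • E j j := by
        intro c
        simp only [star_add, star_smul, add_mul, mul_add, smul_add, smul_mul_assoc,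
          mul_smul_comm, hEmul, smul_smul, Complex.star_def]
        abel
      have h1 := (hpos (E k0 i + (1:ℂ) • E k0 j)).2
      rw [expand 1] at h1
      have h2 := (hpos (E k0 i + Complex.I • E k0 j)).2
      rw [expand Complex.I] at h2
      simp only [map_add, _root_.map_smul, _root_.map_one, one_smul, smul_eq_mul,
        Complex.add_im, Complex.conj_I, neg_mul, Complex.neg_im, Complex.mul_im,
        Complex.mul_re, Complex.I_re, Complex.I_im, Complex.one_re, Complex.one_im,
        Complex.neg_re, Complex.neg_im, hdiag, mul_zero, zero_mul, one_mul, mul_one,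
        sub_zero, add_zero, zero_add, neg_zero, neg_neg] at h1 h2
      apply Complex.ext
      · simp only [Complex.conj_re]
        nlinarith [h2]
      · simp only [Complex.conj_im]
        nlinarith [h1]
    have hQherm : Q.IsHermitian := by
      ext i j
      simp only [Matrix.conjTranspose_apply, hQdef, Matrix.of_apply, RCLike.star_def]
      exact (hpair j i).symm
    have hQpos : Q.PosDef := by
      refine Matrix.posDef_iff_dotProduct_mulVec.mpr ⟨hQherm, fun v hv => ?_⟩
      set y : Matrix (Fin n) (Fin n) ℂ :=
        Matrix.of (fun k l => if k = k0 then (starRingEnd ℂ) (v l) else 0) with hy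
      have hyv : star y * y = Matrix.of (fun i j => v i * (starRingEnd ℂ) (v j)) := by
        ext i j
        simp [Matrix.mul_apply, Matrix.conjTranspose_apply, hy, apply_ite, Finset.sum_ite_eq,
          mul_comm]
      have hval : ψ (star y * y) = dotProduct (star v) (Q *ᵥ v) := by
        rw [hψ, hyv]
        simp only [Matrix.trace, Matrix.mul_apply, Matrix.diag, Matrix.of_apply, dotProduct,
          Matrix.mulVec, Pi.star_apply, Finset.mul_sum, Finset.sum_mul, RCLike.star_def]
        refine Finset.sum_congr rfl fun i _ => Finset.sum_congr rfl fun j _ => by ring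
      have hy0 : y ≠ 0 := by
        intro h
        apply hv
        funext l
        have := congrFun (congrFun h k0) l
        simp only [hy, Matrix.of_apply, if_pos rfl, Matrix.zero_apply] at this
        simpa using congrArg (starRingEnd ℂ) this
      have hne : ψ (star y * y) ≠ 0 := fun h => hy0 (hfaith y h)
      rw [← hval]
      obtain ⟨hre, himm⟩ := hpos y
      rw [Complex.lt_def]
      refine ⟨?_, by simp [himm]⟩
      simp only [Complex.zero_re]
      rcases lt_or_eq_of_le hre with h | h
      · exact h
      · exact absurd (Complex.ext h.symm himm) hne
    have htrQ : Q.trace = 1 := by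
      have : Q.trace = ψ (∑ i, E i i) := by
        simp [Matrix.trace, hQdef, Matrix.diag, map_sum]
      rw [this, hE]
      simp only [aux_sum_E]
      exact hstate
    refine ⟨Q, ⟨hQpos, htrQ, hψ⟩, ?_⟩
    rintro Q' ⟨_, _, hψ'⟩
    ext i j
    have e : ∀ R : Matrix (Fin n) (Fin n) ℂ, (R * E j i).trace = R i j := by
      intro R
      have := aux_trace_mul_E_mul R 1 j i
      simpa using this
    have h1 := hψ (E j i)
    have h2 := hψ' (E j i)
    rw [e] at h1
    rw [e] at h2
    rw [← h2, h1]
  · -- delta form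
    intro Q hQ htrQ hψ
    have hinv : Q⁻¹ * Q = 1 :=
      Matrix.nonsing_inv_mul Q ((Matrix.isUnit_iff_isUnit_det Q).mp hQ.isUnit)
    refine ⟨∑ i : Fin n, ∑ j : Fin n,
      (TensorProduct.mk ℂ _ _ (E i j * Q⁻¹)).comp (LinearMap.mulLeft ℂ (E j i)), ?_, ?_⟩
    · intro a x y
      simp only [LinearMap.sum_apply, LinearMap.comp_apply, LinearMap.mulLeft_apply,
        TensorProduct.mk_apply, map_sum, aux_pairing_tmul]
      have l1 : ∀ i j : Fin n, ψ (star x * (E i j * Q⁻¹)) = star x j i := by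
        intro i j
        rw [hψ, show Q * (star x * (E i j * Q⁻¹)) = (Q * star x) * E i j * Q⁻¹ by
          simp [Matrix.mul_assoc], aux_trace_mul_E_mul, ← Matrix.mul_assoc, hinv,
          Matrix.one_mul]
      have l2 : ∀ i j : Fin n, ψ (star y * (E j i * a)) = (a * (Q * star y)) i j := by
        intro i j
        rw [hψ, show Q * (star y * (E j i * a)) = (Q * star y) * E j i * a by
          simp [Matrix.mul_assoc], aux_trace_mul_E_mul]
      simp only [l1, l2]
      rw [hψ, StarMul.star_mul]
      have : ∑ i, ∑ j, star x j i * (a * (Q * star y)) i j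
          = ((a * (Q * star y)) * star x).trace := by
        simp only [Matrix.trace, Matrix.mul_apply, Matrix.diag]
        exact Finset.sum_congr rfl fun i _ => Finset.sum_congr rfl fun j _ => mul_comm _ _
      rw [this, show a * (Q * star y) * star x = a * (Q * star y * star x) from
        Matrix.mul_assoc _ _ _, Matrix.trace_mul_comm]
      congr 1
      simp [Matrix.mul_assoc]
    · apply LinearMap.ext
      intro a
      simp only [LinearMap.comp_apply, LinearMap.sum_apply, map_sum, LinearMap.mulLeft_apply,
        TensorProduct.mk_apply, LinearMap.mul'_apply, LinearMap.smul_apply, LinearMap.id_coe,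
        id_eq]
      have key : ∀ i j : Fin n, (E i j * Q⁻¹) * (E j i * a) = Q⁻¹ j j • (E i i * a) := by
        intro i j
        rw [← Matrix.mul_assoc, show E i j * Q⁻¹ * E j i = Q⁻¹ j j • E i i from
          aux_sandwich Q⁻¹ i j, Matrix.smul_mul]
      simp only [key]
      rw [Finset.sum_comm]
      simp only [← Finset.smul_sum, ← Matrix.sum_mul]
      rw [hE]
      simp only [aux_sum_E, Matrix.one_mul, ← Finset.sum_smul]
      congr 1
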